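/- For the convergents Conv_h(q,z) = P_h(q,z)/Q_h(q,z) of the square series J-fraction, the difference of consecutive convergents satisfies Conv_h(q,z) - Conv_{h-1}(q,z) = (-1)^{h-1}·q^{(3h-4)(h-1)}·(q²;q²)_{h-1}·z^{2h-2} / (Q_{h-1}(q,z)·Q_h(q,z)) for all h ≥ 2. -/
import Mathlib


/-- The q-Pochhammer symbol `(a; q)_n = ∏_{j=0}^{n-1} (1 - a q^j)`. -/
noncomputable def qPoch {K : Type*} [Field K] (q a : K) (n : ℕ) : K :=
  ∏ j ∈ Finset.range n, (1 - a * q ^ j)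

/-- The numerator convergents `P_h(q, z)` of the square series J-fraction. -/
noncomputable def Pconv {K : Type*} [Field K] (q z : K) : ℕ → K
  | 0 => 0
  | 1 => 1
  | (h + 2) =>
      (1 - q ^ (2 * (h + 2) - 3) * (q ^ (2 * (h + 2)) + q ^ (2 * (h + 2) - 2) - 1) * z) *
          Pconv q z (h + 1)
        - q ^ (6 * (h + 2) - 10) * (q ^ (2 * (h + 2) - 2) - 1) * z ^ 2 * Pconv q z h

/-- The denominator convergents `Q_h(q, z)` of the square series J-fraction. -/
noncomputable def Qconv {K : Type*} [Field K] (q z : K) : ℕ → K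
  | 0 => 1
  | 1 => 1 - q * z
  | (h + 2) =>
      (1 - q ^ (2 * (h + 2) - 3) * (q ^ (2 * (h + 2)) + q ^ (2 * (h + 2) - 2) - 1) * z) *
          Qconv q z (h + 1)
        - q ^ (6 * (h + 2) - 10) * (q ^ (2 * (h + 2) - 2) - 1) * z ^ 2 * Qconv q z h

/-- Determinant identity: `P_h Q_{h-1} - P_{h-1} Q_h = (-1)^{h-1} q^{(3h-4)(h-1)} (q²;q²)_{h-1} z^{2h-2}`. -/
lemma det9 {K : Type*} [Field K] (q z : K) : ∀ m : ℕ,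
    Pconv q z (m + 1) * Qconv q z m - Pconv q z m * Qconv q z (m + 1) =
      (-1 : K) ^ m * q ^ ((3 * (m + 1) - 4) * m) * qPoch (q ^ 2) (q ^ 2) m * z ^ (2 * m) := by
  intro m
  induction m with
  | zero => simp [Pconv, Qconv, qPoch]
  | succ n ih =>
    have hq : qPoch (q ^ 2) (q ^ 2) (n + 1)
        = qPoch (q ^ 2) (q ^ 2) n * (1 - q ^ 2 * (q ^ 2) ^ n) := by
      simp [qPoch, Finset.prod_range_succ]
    have eP : Pconv q z (n + 2) =
        (1 - q ^ (2 * (n + 2) - 3) * (q ^ (2 * (n + 2)) + q ^ (2 * (n + 2) - 2) - 1) * z) *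
          Pconv q z (n + 1)
        - q ^ (6 * (n + 2) - 10) * (q ^ (2 * (n + 2) - 2) - 1) * z ^ 2 * Pconv q z n := rfl
    have eQ : Qconv q z (n + 2) =
        (1 - q ^ (2 * (n + 2) - 3) * (q ^ (2 * (n + 2)) + q ^ (2 * (n + 2) - 2) - 1) * z) *
          Qconv q z (n + 1)
        - q ^ (6 * (n + 2) - 10) * (q ^ (2 * (n + 2) - 2) - 1) * z ^ 2 * Qconv q z n := rfl
    have e1 : (3 * (n + 2) - 4) * (n + 1) = (3 * (n + 1) - 4) * n + (6 * (n + 2) - 10) := by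
      cases n with
      | zero => rfl
      | succ k =>
        rw [show 3 * (k + 1 + 2) - 4 = 3 * k + 5 by omega,
          show 3 * (k + 1 + 1) - 4 = 3 * k + 2 by omega,
          show 6 * (k + 1 + 2) - 10 = 6 * k + 8 by omega]
        ring
    have fa : q ^ ((3 * (n + 2) - 4) * (n + 1))
        = q ^ ((3 * (n + 1) - 4) * n) * q ^ (6 * (n + 2) - 10) := by
      rw [← pow_add, e1]
    have fb : z ^ (2 * (n + 1)) = z ^ (2 * n) * z ^ 2 := by
      rw [show 2 * (n + 1) = 2 * n + 2 by ring, pow_add]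
    have fc : q ^ (2 * (n + 2) - 2) = q ^ 2 * (q ^ 2) ^ n := by
      rw [show 2 * (n + 2) - 2 = 2 + 2 * n by omega, pow_add, pow_mul]
    rw [show n + 1 + 1 = n + 2 from rfl, eP, eQ, hq, fa, fb, fc]
    linear_combination (q ^ (6 * (n + 2) - 10) * (q ^ 2 * (q ^ 2) ^ n - 1) * z ^ 2) * ih

theorem stmt9 {K : Type*} [Field K] (q z : K) (h : ℕ) (hh : 2 ≤ h)
    (hQ1 : Qconv q z (h - 1) ≠ 0) (hQ2 : Qconv q z h ≠ 0) :
    Pconv q z h / Qconv q z h - Pconv q z (h - 1) / Qconv q z (h - 1) =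
      (-1) ^ (h - 1) * q ^ ((3 * h - 4) * (h - 1)) * qPoch (q ^ 2) (q ^ 2) (h - 1) *
          z ^ (2 * h - 2) / (Qconv q z (h - 1) * Qconv q z h) := by
  obtain ⟨m, rfl⟩ : ∃ m, h = m + 2 := ⟨h - 2, by omega⟩
  rw [show m + 2 - 1 = m + 1 by omega] at hQ1 ⊢
  rw [show 2 * (m + 2) - 2 = 2 * (m + 1) by omega]
  have key := det9 q z (m + 1)
  rw [show m + 1 + 1 = m + 2 from rfl] at key
  rw [div_sub_div _ _ hQ2 hQ1, mul_comm (Qconv q z (m + 2)) (Pconv q z (m + 1)), key,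
    mul_comm (Qconv q z (m + 2)) (Qconv q z (m + 1))]
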